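/- Let $W = \mathbb{C}((t))\partial_t$ be the Witt algebra of vector fields on the punctured formal disc, with basis $L_n = -t^{n+1}\partial_t$, $n \in \mathbb{Z}$, and bracket $[L_m, L_n] = (m-n)L_{m+n}$. Then for every $c \in \mathbb{C}$ the 2-cochain $\omega_c(L_m, L_n) = \frac{c}{12}(m^3 - m)\delta_{m,-n}$ is a Lie algebra 2-cocycle on $W$, and the resulting central extensions $\mathrm{Vir}'_c$ for distinct $c$ are pairwise non-isomorphic as extensions; every 2-cocycle on $W$ is cohomologous to $\omega_c$ for a unique $c$. -/

import Mathlib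

/-- The Virasoro cocycles on the Witt algebra.  Let `W` be the Witt algebra,
presented as a Lie algebra over `ℂ` with basis `Lₙ`, `n ∈ ℤ`, and bracket
`⁅Lₘ, Lₙ⁆ = (m - n) L_{m+n}`.  Then for every `c ∈ ℂ` the 2-cochain
`ω_c(Lₘ, Lₙ) = (c/12)(m³ - m) δ_{m,-n}` extends to a Lie algebra 2-cocycle on
`W`, and every 2-cocycle on `W` is cohomologous to `ω_c` for a unique `c`
(so `H²(W; ℂ) ≅ ℂ` and the central extensions `Vir'_c` for distinct `c` are
pairwise non-isomorphic as extensions). -/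
theorem witt_algebra_H2
    (W : Type*) [LieRing W] [LieAlgebra ℂ W]
    (L : Module.Basis ℤ ℂ W)
    (hL : ∀ m n : ℤ, ⁅L m, L n⁆ = ((m : ℂ) - (n : ℂ)) • L (m + n)) :
    (∀ c : ℂ, ∃ ω : W →ₗ[ℂ] W →ₗ[ℂ] ℂ,
      (∀ x, ω x x = 0) ∧
      (∀ x y z, ω ⁅x, y⁆ z + ω ⁅y, z⁆ x + ω ⁅z, x⁆ y = 0) ∧
      (∀ m n : ℤ, ω (L m) (L n) =
        if m + n = 0 then c / 12 * ((m : ℂ) ^ 3 - (m : ℂ)) else 0)) ∧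
    (∀ ω : W →ₗ[ℂ] W →ₗ[ℂ] ℂ,
      (∀ x, ω x x = 0) →
      (∀ x y z, ω ⁅x, y⁆ z + ω ⁅y, z⁆ x + ω ⁅z, x⁆ y = 0) →
      ∃! c : ℂ, ∃ f : W →ₗ[ℂ] ℂ, ∀ m n : ℤ,
        ω (L m) (L n) =
          (if m + n = 0 then c / 12 * ((m : ℂ) ^ 3 - (m : ℂ)) else 0)
            + f ⁅L m, L n⁆) := by
  constructor
  · -- existence of the Virasoro cocycle for each c
    intro c
    set v : ℤ → ℤ → ℂ := fun m n =>
      if m + n = 0 then c / 12 * ((m : ℂ) ^ 3 - (m : ℂ)) else 0 with hv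
    refine ⟨L.constr ℂ (fun m => L.constr ℂ (fun n => v m n)), ?_, ?_, ?_⟩
    · set ω := L.constr ℂ (fun m => L.constr ℂ (fun n => v m n)) with hω
      have hbasis : ∀ m n : ℤ, ω (L m) (L n) = v m n := by
        intro m n; simp [hω, Module.Basis.constr_basis]
      have hskew : ω + ω.flip = 0 := by
        apply L.ext; intro m; apply L.ext; intro n
        simp only [LinearMap.add_apply, LinearMap.flip_apply, LinearMap.zero_apply]
        rw [hbasis, hbasis, hv]
        by_cases h : m + n = 0
        · have h' : n + m = 0 := by omega
          have hn : (n : ℂ) = -(m : ℂ) := by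
            have : n = -m := by omega
            push_cast [this]; ring
          simp only [h, h', if_true, hn]; ring
        · have h' : ¬ n + m = 0 := by omega
          simp [h, h']
      intro x
      have h2 : ω x x + ω x x = 0 := by
        have := LinearMap.congr_fun (LinearMap.congr_fun hskew x) x
        simpa using this
      exact add_self_eq_zero.mp h2
    · set ω := L.constr ℂ (fun m => L.constr ℂ (fun n => v m n)) with hω
      have hbasis : ∀ m n : ℤ, ω (L m) (L n) = v m n := by
        intro m n; simp [hω, Module.Basis.constr_basis]
      set B : W →ₗ[ℂ] W →ₗ[ℂ] W := LinearMap.mk₂ ℂ (fun x y => ⁅x, y⁆) add_lie smul_lie lie_add lie_smul with hB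
      set T1 : W →ₗ[ℂ] W →ₗ[ℂ] W →ₗ[ℂ] ℂ := B.compr₂ ω with hT1
      have hT1ap : ∀ x y z, T1 x y z = ω ⁅x, y⁆ z := fun x y z => rfl
      set T3 : W →ₗ[ℂ] W →ₗ[ℂ] W →ₗ[ℂ] ℂ := LinearMap.lflip.toLinearMap ∘ₗ T1.flip with h3
      have hT3ap : ∀ x y z, T3 x y z = ω ⁅z, x⁆ y := fun x y z => rfl
      set T2 : W →ₗ[ℂ] W →ₗ[ℂ] W →ₗ[ℂ] ℂ := LinearMap.lflip.toLinearMap ∘ₗ T3.flip with h2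
      have hT2ap : ∀ x y z, T2 x y z = ω ⁅y, z⁆ x := fun x y z => rfl
      have key : T1 + T2 + T3 = 0 := by
        apply L.ext; intro k; apply L.ext; intro m; apply L.ext; intro n
        simp only [LinearMap.add_apply, LinearMap.zero_apply, hT1ap, hT2ap, hT3ap,
          hL, map_smul, LinearMap.smul_apply, smul_eq_mul, hbasis, hv]
        by_cases h : k + m + n = 0
        · have h1 : k + m + n = 0 := h
          have h2' : m + n + k = 0 := by omega
          have h3' : n + k + m = 0 := by omega
          have hn : (n : ℂ) = -(k : ℂ) - (m : ℂ) := by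
            have : n = -k - m := by omega
            push_cast [this]; ring
          simp only [h1, h2', h3', if_true]
          push_cast [hn]
          ring
        · have h1 : ¬ k + m + n = 0 := h
          have h2' : ¬ m + n + k = 0 := by omega
          have h3' : ¬ n + k + m = 0 := by omega
          simp [h1, h2', h3']
      intro x y z
      have := LinearMap.congr_fun (LinearMap.congr_fun (LinearMap.congr_fun key x) y) z
      simpa [hT1ap, hT2ap, hT3ap] using this
    · intro m n; simp [Module.Basis.constr_basis, hv]
  · -- uniqueness: every cocycle is cohomologous to ω_c for a unique c
    intro ω halt hcoc
    -- skew symmetry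
    have hskew : ∀ x y : W, ω x y = - ω y x := by
      intro x y
      have h := halt (x + y)
      simp only [map_add, LinearMap.add_apply, halt x, halt y] at h
      linear_combination h
    set a : ℤ → ℤ → ℂ := fun m n => ω (L m) (L n) with ha
    have askew : ∀ m n : ℤ, a m n = - a n m := fun m n => hskew _ _
    have C : ∀ k m n : ℤ, ((k:ℂ)-(m:ℂ)) * a (k+m) n + ((m:ℂ)-(n:ℂ)) * a (m+n) k
        + ((n:ℂ)-(k:ℂ)) * a (n+k) m = 0 := by
      intro k m n
      have h := hcoc (L k) (L m) (L n)
      rw [hL k m, hL m n, hL n k] at h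
      simpa [map_smul, smul_eq_mul, ha] using h
    have E : ∀ m n : ℤ, ((m:ℂ)+(n:ℂ)) * a m n = ((m:ℂ)-(n:ℂ)) * a (m+n) 0 := by
      intro m n
      have h := C 0 m n
      simp only [Int.cast_zero, zero_add, add_zero, zero_sub, sub_zero] at h
      have h2 := askew n m
      linear_combination h2 * (n:ℂ) - h
    set f0 : ℂ := a 1 (-1) / 2 with hf0
    set b : ℤ → ℂ := fun m => a m (-m) - 2*(m:ℂ)*f0 with hbdef
    set c : ℂ := 2 * b 2 with hc
    have ha00 : a 0 0 = 0 := halt (L 0)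
    have hb0 : b 0 = 0 := by simp [hbdef, ha00]
    have hb1 : b 1 = 0 := by simp [hbdef, hf0]; ring
    have hbodd : ∀ m : ℤ, b (-m) = - b m := by
      intro m
      have h := askew m (-m)
      simp only [hbdef]
      push_cast
      rw [neg_neg]
      linear_combination h
    have R : ∀ k : ℤ, ((k:ℂ)-1) * b (k+1) = ((k:ℂ)+2) * b k := by
      intro k
      have h := C k 1 (-k-1)
      have e1 : 1 + (-k-1) = -k := by ring
      have e2 : -k-1+k = -1 := by ring
      rw [e1, e2] at h
      have h1 := askew (-k) k
      have h2 := askew (-1) 1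
      have h3 : -(k+1) = -k-1 := by ring
      simp only [hbdef]
      rw [h3]
      push_cast at h ⊢
      linear_combination h - ((k:ℂ)+2) * h1 + (2*(k:ℂ)+1) * h2
    have hbn : ∀ j : ℕ, b j = c/12 * ((j:ℂ)^3 - (j:ℂ)) := by
      intro j
      induction j using Nat.strong_induction_on with
      | _ j ih =>
        match j with
        | 0 => simpa using hb0
        | 1 => simp only [Nat.cast_one, Int.cast_one]; rw [hb1]; ring
        | 2 => simp only [hc]; push_cast; ring
        | (j+3) =>
          have hj := ih (j+2) (by omega)
          have hr := R ((j:ℤ)+2)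
          have hne : ((j:ℂ)+1) ≠ 0 := Nat.cast_add_one_ne_zero j
          push_cast at hj hr ⊢
          have e3 : ((j:ℤ)+2+1) = ((j:ℤ)+3) := by ring
          rw [e3] at hr
          refine mul_left_cancel₀ hne ?_
          linear_combination hr + ((j:ℂ)+4) * hj
    have hbz : ∀ m : ℤ, b m = c/12 * ((m:ℂ)^3 - (m:ℂ)) := by
      intro m
      obtain ⟨j, rfl | rfl⟩ := Int.eq_nat_or_neg m
      · exact_mod_cast hbn j
      · rw [hbodd]
        have := hbn j
        push_cast at this ⊢
        rw [this]; ring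
    set fval : ℤ → ℂ := fun k => if k = 0 then f0 else a k 0 / (k:ℂ) with hfval
    refine ⟨c, ⟨L.constr ℂ fval, ?_⟩, ?_⟩
    · intro m n
      have hf : ∀ k : ℤ, (L.constr ℂ fval) (L k) = fval k := fun k => L.constr_basis ℂ fval k
      rw [hL, map_smul, smul_eq_mul, hf]
      by_cases h : m + n = 0
      · obtain rfl : n = -m := by omega
        simp only [h, if_true, hfval, if_pos rfl]
        have hbm := hbz m
        simp only [hbdef] at hbm
        push_cast
        linear_combination hbm
      · have hmn : ((m:ℂ)+(n:ℂ)) ≠ 0 := by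
          have h2 : ((m+n : ℤ) : ℂ) ≠ 0 := Int.cast_ne_zero.mpr h
          push_cast at h2; exact h2
        simp only [h, if_false, hfval, if_neg h, zero_add]
        have hE := E m n
        field_simp
        push_cast; linear_combination hE
    · rintro c' ⟨f', hf'⟩
      have h1 := hf' 1 (-1)
      have h2 := hf' 2 (-2)
      rw [hL, map_smul] at h1 h2
      simp only [smul_eq_mul] at h1 h2
      norm_num at h1 h2
      -- h1 : a 1 (-1) = 2 * f' (L 0); h2 : a 2 (-2) = c'/2 + 4 * f' (L 0)
      simp only [hc, hbdef, hf0]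
      push_cast
      linear_combination -2*h2 + 4*h1
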